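/- (Bases are in bijection with bounded feasible chambers.) Let W ⊆ ℝ^E be a linear subspace, and let h, z ∈ ℝ^E be generic parameters: ⟨h, γ⟩ ≠ 0 for every circuit γ of W, and ⟨z, χ⟩ ≠ 0 for every cocircuit χ (circuit of Wᗮ). Call a subset b ⊆ E a base if the coordinate-restriction map Wᗮ → ℝ^b, u ↦ (u(e))_{e∈b}, is a linear isomorphism; for a base b there is a unique point v_b ∈ ℝ^E with v_b − h ∈ Wᗮ and v_b(e) = 0 for all e ∈ b (the vertex H_b of the arrangement). Then: (i) for every base b there is a unique sign vector μ(b) : E → {+1,−1} which is h-feasible and z-bounded and satisfies v_b ∈ Δ_{μ(b)}(h) and ⟨z, v⟩ ≤ ⟨z, v_b⟩ for all v ∈ Δ_{μ(b)}(h) (i.e. the chamber Δ_{μ(b)}(h) has ζ-maximum at H_b); and (ii) the assignment b ↦ μ(b) is a bijection from the set of bases onto the set of sign vectors that are both h-feasible and z-bounded. -/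

import Mathlib

/-- The standard inner product on `ℝ^E`. -/
noncomputable def dot {E : Type*} [Fintype E] (x y : E → ℝ) : ℝ := ∑ e, x e * y e

/-- The orthogonal complement of a subspace `W ⊆ ℝ^E` with respect to the
standard inner product. -/
def perp {E : Type*} [Fintype E] (W : Submodule ℝ (E → ℝ)) : Set (E → ℝ) :=
  {u | ∀ w ∈ W, dot w u = 0}

/-- The chamber `Δ_α(h) := { v : v - h ∈ Wᗮ, α e * v e ≥ 0 ∀ e }`. -/
def Chamber {E : Type*} [Fintype E] (W : Submodule ℝ (E → ℝ)) (h α : E → ℝ) :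
    Set (E → ℝ) :=
  {v | v - h ∈ perp W ∧ ∀ e, 0 ≤ α e * v e}

/-- A sign vector `α` is `h`-feasible if the chamber `Δ_α(h)` is nonempty. -/
def IsFeasible {E : Type*} [Fintype E] (W : Submodule ℝ (E → ℝ)) (h α : E → ℝ) : Prop :=
  (Chamber W h α).Nonempty

/-- The cone `C_α := { u ∈ Wᗮ : α e * u e ≥ 0 for all e }`. -/
def cone {E : Type*} [Fintype E] (W : Submodule ℝ (E → ℝ)) (α : E → ℝ) : Set (E → ℝ) :=
  {u | u ∈ perp W ∧ ∀ e, 0 ≤ α e * u e}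

/-- A sign vector `α` is `z`-bounded if `u ↦ ⟨z, u⟩` is bounded above on `C_α`. -/
def IsBoundedSV {E : Type*} [Fintype E] (W : Submodule ℝ (E → ℝ)) (z α : E → ℝ) : Prop :=
  BddAbove ((fun u => dot z u) '' cone W α)

/-- A circuit of a subset `U ⊆ ℝ^E` is a nonzero element of `U` whose support is
minimal under inclusion among supports of nonzero elements of `U`. -/
def IsCircuit {E : Type*} [Fintype E] (U : Set (E → ℝ)) (u : E → ℝ) : Prop :=
  u ∈ U ∧ u ≠ 0 ∧
    ∀ w ∈ U, w ≠ 0 → {e | w e ≠ 0} ⊆ {e | u e ≠ 0} → {e | w e ≠ 0} = {e | u e ≠ 0}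

/-- A subset `b ⊆ E` is a base if the coordinate-restriction map `Wᗮ → ℝ^b`
is a linear isomorphism (i.e. is bijective). -/
def IsBase {E : Type*} [Fintype E] (W : Submodule ℝ (E → ℝ)) (b : Set E) : Prop :=
  Function.Bijective (fun (u : perp W) (e : b) => u.1 e.1)

namespace HT
variable {E : Type*} [Fintype E]

lemma dot_comm (x y : E → ℝ) : dot x y = dot y x := by
  unfold dot; exact Finset.sum_congr rfl fun e _ => mul_comm _ _

lemma dot_add (z u v : E → ℝ) : dot z (u + v) = dot z u + dot z v := by
  unfold dot; rw [← Finset.sum_add_distrib]; exact Finset.sum_congr rfl fun e _ => by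
    simp [mul_add]

lemma dot_smul (z u : E → ℝ) (c : ℝ) : dot z (c • u) = c * dot z u := by
  unfold dot; rw [Finset.mul_sum]; exact Finset.sum_congr rfl fun e _ => by
    simp; ring

lemma dot_sub (z u v : E → ℝ) : dot z (u - v) = dot z u - dot z v := by
  unfold dot; rw [← Finset.sum_sub_distrib]; exact Finset.sum_congr rfl fun e _ => by
    simp [mul_sub]

lemma dot_single (γ : E → ℝ) (f : E) (c : ℝ) [DecidableEq E] :
    dot γ (Pi.single f c) = γ f * c := by
  unfold dot
  rw [Finset.sum_eq_single f]
  · simp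
  · intro e _ he; simp [Pi.single_apply, he]
  · simp

lemma dot_finsum (z : E → ℝ) (s : Finset E) (f : E → (E → ℝ)) :
    dot z (∑ e ∈ s, f e) = ∑ e ∈ s, dot z (f e) := by
  classical
  induction s using Finset.induction_on with
  | empty => simp [dot]
  | insert a s' hnot ih =>
                      rw [Finset.sum_insert hnot, dot_add, ih, Finset.sum_insert hnot]

def perpSub (W : Submodule ℝ (E → ℝ)) : Submodule ℝ (E → ℝ) where
  carrier := perp W
  add_mem' := by
    intro a b ha hb w hw
    rw [dot_add]
    rw [ha w hw, hb w hw]; ring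
  zero_mem' := by intro w hw; simp [dot]
  smul_mem' := by
    intro c a ha w hw
    rw [dot_smul, ha w hw]; ring

lemma mem_perpSub {W : Submodule ℝ (E → ℝ)} {u : E → ℝ} : u ∈ perpSub W ↔ u ∈ perp W :=
  Iff.rfl

/-- Submodule of functions vanishing on s. -/
def vanishSub (s : Set E) : Submodule ℝ (E → ℝ) where
  carrier := {x | ∀ f ∈ s, x f = 0}
  add_mem' := by intro a b ha hb f hf; simp [ha f hf, hb f hf]
  zero_mem' := by intro f hf; rfl
  smul_mem' := by intro c a ha f hf; simp [ha f hf]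

lemma inner_eq_dot {I : Type*} [Fintype I] (x y : EuclideanSpace ℝ I) :
    (inner ℝ x y : ℝ) = dot (WithLp.equiv 2 (I → ℝ) x) (WithLp.equiv 2 (I → ℝ) y) := by
  simp [PiLp.inner_apply, dot, RCLike.inner_apply, mul_comm]

lemma dualAnn (S : Submodule ℝ (E → ℝ)) (x : E → ℝ)
    (hx : ∀ γ : E → ℝ, (∀ s ∈ S, dot γ s = 0) → dot γ x = 0) : x ∈ S := by
  let e : EuclideanSpace ℝ E ≃ₗ[ℝ] (E → ℝ) := WithLp.linearEquiv 2 ℝ (E → ℝ)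
  let S' : Submodule ℝ (EuclideanSpace ℝ E) := S.comap e.toLinearMap
  have key : S'ᗮᗮ = S' := Submodule.orthogonal_orthogonal S'
  have hmem : (e.symm x) ∈ S'ᗮᗮ := by
    rw [Submodule.mem_orthogonal]
    intro γ hγ
    rw [Submodule.mem_orthogonal] at hγ
    have h1 : ∀ s ∈ S, dot (e γ) s = 0 := by
      intro s hs
      have h0 := hγ (e.symm s) (by simpa [S'] using hs)
      rw [inner_eq_dot] at h0
      simpa [e, dot_comm s] using h0
    have := hx (e γ) h1
    rw [inner_eq_dot]
    simpa [e, dot_comm] using this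
  rw [key] at hmem
  simpa [S', e] using hmem

/-- contrapositive form -/
lemma dualAnn' (S : Submodule ℝ (E → ℝ)) (x : E → ℝ) (hx : x ∉ S) :
    ∃ γ : E → ℝ, (∀ s ∈ S, dot γ s = 0) ∧ dot γ x ≠ 0 := by
  by_contra hcon
  push_neg at hcon
  exact hx (dualAnn S x fun γ hγ => by
    by_contra hne
    exact hne (hcon γ hγ))

lemma mem_W_of_perp {W : Submodule ℝ (E → ℝ)} {γ : E → ℝ}
    (hγ : ∀ u ∈ perp W, dot γ u = 0) : γ ∈ W := by
  apply dualAnn W γ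
  intro δ hδ
  rw [dot_comm]
  exact hγ δ (fun w hw => by rw [dot_comm]; exact hδ w hw)

/-- circuit extraction -/
lemma exists_circuit (U : Set (E → ℝ)) (u : E → ℝ) (hu : u ∈ U) (hne : u ≠ 0) :
    ∃ χ, IsCircuit U χ ∧ {e | χ e ≠ 0} ⊆ {e | u e ≠ 0} := by
  classical
  obtain ⟨n, hn⟩ : ∃ n, ({e | u e ≠ 0}).ncard ≤ n := ⟨_, le_refl _⟩
  induction n generalizing u with
  | zero =>
    exfalso
    have : {e | u e ≠ 0} = ∅ := by
      have := Set.ncard_eq_zero (s := {e | u e ≠ 0}) (Set.toFinite _)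
      exact this.mp (Nat.le_zero.mp hn)
    apply hne
    funext e
    have h2 := Set.eq_empty_iff_forall_notMem.mp this e
    simpa using h2
  | succ m ih =>
    by_cases hc : ∀ w ∈ U, w ≠ 0 → {e | w e ≠ 0} ⊆ {e | u e ≠ 0} → {e | w e ≠ 0} = {e | u e ≠ 0}
    · exact ⟨u, ⟨hu, hne, hc⟩, subset_rfl⟩
    · push_neg at hc
      obtain ⟨w, hw, hwne, hsub, hneq⟩ := hc
      have hss : {e | w e ≠ 0} ⊂ {e | u e ≠ 0} := ⟨hsub, fun hx => hneq (le_antisymm hsub hx)⟩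
      have hcard : ({e | w e ≠ 0}).ncard < ({e | u e ≠ 0}).ncard :=
        Set.ncard_lt_ncard hss (Set.toFinite _)
      obtain ⟨χ, hχ, hsub'⟩ := ih w hw hwne (by omega)
      exact ⟨χ, hχ, hsub'.trans hsub⟩

end HT

namespace HT
variable {E : Type*} [Fintype E] {W : Submodule ℝ (E → ℝ)}

def InjB (W : Submodule ℝ (E → ℝ)) (b : Set E) : Prop :=
  ∀ u ∈ perp W, (∀ e ∈ b, u e = 0) → u = 0

def SurjB (W : Submodule ℝ (E → ℝ)) (b : Set E) : Prop :=
  ∀ y : E → ℝ, ∃ u ∈ perp W, ∀ e ∈ b, u e = y e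

lemma isBase_iff {b : Set E} : IsBase W b ↔ InjB W b ∧ SurjB W b := by
  classical
  constructor
  · rintro ⟨hinj, hsurj⟩
    constructor
    · intro u hu hub
      have : (fun (e : b) => u e.1) = (fun (e : b) => (0 : E → ℝ) e.1) := by
        funext e; simpa using hub e.1 e.2
      have := hinj (a₁ := ⟨u, hu⟩) (a₂ := ⟨0, (perpSub W).zero_mem⟩) this
      simpa [Subtype.ext_iff] using this
    · intro y
      obtain ⟨u, hu⟩ := hsurj (fun e : b => y e.1)
      exact ⟨u.1, u.2, fun e he => congrFun hu ⟨e, he⟩⟩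
  · rintro ⟨hinj, hsurj⟩
    constructor
    · rintro ⟨u₁, hu₁⟩ ⟨u₂, hu₂⟩ hu
      have hmem : u₁ - u₂ ∈ perp W := (perpSub W).sub_mem hu₁ hu₂
      have : u₁ - u₂ = 0 := hinj _ hmem (fun e he => by
        have := congrFun hu ⟨e, he⟩
        simpa [sub_eq_zero] using this)
      ext1
      exact sub_eq_zero.mp this
    · intro y
      obtain ⟨u, hu, huy⟩ := hsurj (fun f => if hf : f ∈ b then y ⟨f, hf⟩ else 0)
      refine ⟨⟨u, hu⟩, ?_⟩
      funext e
      simpa [e.2] using huy e.1 e.2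

section Base
variable {h z : E → ℝ} {b : Set E}

lemma vb_exists (hb : IsBase W b) (h : E → ℝ) :
    ∃ v : E → ℝ, (v - h ∈ perp W ∧ ∀ e ∈ b, v e = 0) := by
  obtain ⟨hinj, hsurj⟩ := isBase_iff.mp hb
  obtain ⟨u, hu, huy⟩ := hsurj (-h)
  refine ⟨h + u, by simpa using hu, fun e he => by simp [huy e he]⟩

lemma vb_unique (hb : IsBase W b) {h v v' : E → ℝ}
    (hv : v - h ∈ perp W ∧ ∀ e ∈ b, v e = 0)
    (hv' : v' - h ∈ perp W ∧ ∀ e ∈ b, v' e = 0) : v = v' := by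
  obtain ⟨hinj, _⟩ := isBase_iff.mp hb
  have hmem : v - v' ∈ perp W := by
    have := (perpSub W).sub_mem hv.1 hv'.1
    simpa [mem_perpSub] using this
  have := hinj _ hmem (fun e he => by simp [hv.2 e he, hv'.2 e he])
  exact sub_eq_zero.mp this

lemma uvec_exists (hb : IsBase W b) (e : E) (he : e ∈ b) :
    ∃ u : E → ℝ, u ∈ perp W ∧ u e = 1 ∧ ∀ f ∈ b, f ≠ e → u f = 0 := by
  classical
  obtain ⟨hinj, hsurj⟩ := isBase_iff.mp hb
  obtain ⟨u, hu, huy⟩ := hsurj (fun f => if f = e then 1 else 0)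
  exact ⟨u, hu, by simpa using huy e he, fun f hf hfe => by simpa [hfe] using huy f hf⟩

end Base
end HT

namespace HT
variable {E : Type*} [Fintype E] {W : Submodule ℝ (E → ℝ)}

open Classical in
noncomputable def vbF (W : Submodule ℝ (E → ℝ)) (h : E → ℝ) (b : Set E) : E → ℝ :=
  if hb : IsBase W b then Classical.choose (vb_exists hb h) else 0

open Classical in
noncomputable def uvecF (W : Submodule ℝ (E → ℝ)) (b : Set E) (e : E) : E → ℝ :=
  if hc : IsBase W b ∧ e ∈ b then Classical.choose (uvec_exists hc.1 e hc.2) else 0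

lemma vbF_spec {b : Set E} (hb : IsBase W b) (h : E → ℝ) :
    vbF W h b - h ∈ perp W ∧ ∀ e ∈ b, vbF W h b e = 0 := by
  rw [vbF, dif_pos hb]
  exact Classical.choose_spec (vb_exists hb h)

lemma uvecF_spec {b : Set E} (hb : IsBase W b) {e : E} (he : e ∈ b) :
    uvecF W b e ∈ perp W ∧ uvecF W b e e = 1 ∧ ∀ f ∈ b, f ≠ e → uvecF W b e f = 0 := by
  rw [uvecF, dif_pos ⟨hb, he⟩]
  exact Classical.choose_spec (uvec_exists hb e he)

/-- expansion of elements of `Wᗮ` in the basis `uvecF` -/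
lemma expansion {b : Set E} (hb : IsBase W b) {u : E → ℝ} (hu : u ∈ perp W) :
    u = ∑ e ∈ (Set.toFinite b).toFinset, u e • uvecF W b e := by
  classical
  obtain ⟨hinj, _⟩ := isBase_iff.mp hb
  have hmem : u - ∑ e ∈ (Set.toFinite b).toFinset, u e • uvecF W b e ∈ perp W := by
    refine (perpSub W).sub_mem hu ?_
    exact Submodule.sum_mem _ (fun e he => (perpSub W).smul_mem _ ((uvecF_spec hb (by simpa using he)).1))
  have := hinj _ hmem (fun f hf => by
    have : (∑ e ∈ (Set.toFinite b).toFinset, u e • uvecF W b e) f = u f := by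
      rw [Finset.sum_apply]
      rw [Finset.sum_eq_single f]
      · simp [(uvecF_spec hb hf).2.1]
      · intro e he hef
        have := (uvecF_spec hb (by simpa using he)).2.2 f hf (Ne.symm hef)
        simp [this]
      · intro hf'; exact absurd (by simpa using hf) hf'
    rw [Pi.sub_apply, this, sub_self])
  exact sub_eq_zero.mp this

lemma dot_expansion {b : Set E} (hb : IsBase W b) {u : E → ℝ} (hu : u ∈ perp W) (z : E → ℝ) :
    dot z u = ∑ e ∈ (Set.toFinite b).toFinset, u e * dot z (uvecF W b e) := by
  conv_lhs => rw [expansion hb hu]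
  rw [dot_finsum]
  exact Finset.sum_congr rfl fun e _ => dot_smul _ _ _

lemma uvec_circuit {b : Set E} (hb : IsBase W b) {e : E} (he : e ∈ b) :
    IsCircuit (perp W) (uvecF W b e) := by
  obtain ⟨hmem, he1, hb0⟩ := uvecF_spec hb he
  obtain ⟨hinj, _⟩ := isBase_iff.mp hb
  refine ⟨hmem, fun h0 => by simpa [h0] using he1, ?_⟩
  intro w hw hwne hsub
  -- w = w e • uvecF W b e
  have hwb : ∀ f ∈ b, f ≠ e → w f = 0 := by
    intro f hf hfe
    by_contra hwf
    exact hwf (by simpa using absurd (hsub hwf) (by simp [hb0 f hf hfe]))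
  have hweq : w = w e • uvecF W b e := by
    have hmem2 : w - w e • uvecF W b e ∈ perp W :=
      (perpSub W).sub_mem hw ((perpSub W).smul_mem _ hmem)
    have := hinj _ hmem2 (fun f hf => by
      by_cases hfe : f = e
      · subst hfe; simp [he1]
      · simp [hwb f hf hfe, hb0 f hf hfe])
    exact sub_eq_zero.mp this
  have hwe : w e ≠ 0 := by
    intro h0
    exact hwne (by rw [hweq, h0]; simp)
  ext f
  simp only [Set.mem_setOf_eq]
  constructor
  · intro hf; exact hsub hf
  · intro hf
    rw [hweq]
    simp only [Pi.smul_apply, smul_eq_mul]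
    exact mul_ne_zero hwe hf

/-- every injective set contains a base -/
lemma base_of_inj (c : Set E) (hc : InjB W c) : ∃ b ⊆ c, IsBase W b := by
  classical
  obtain ⟨n, hn⟩ : ∃ n, c.ncard ≤ n := ⟨_, le_refl _⟩
  induction n generalizing c with
  | zero =>
    refine ⟨c, subset_rfl, isBase_iff.mpr ⟨hc, ?_⟩⟩
    have hce : c = ∅ := (Set.ncard_eq_zero (Set.toFinite _)).mp (Nat.le_zero.mp hn)
    intro y
    exact ⟨0, (perpSub W).zero_mem, fun e he => absurd (hce ▸ he) (Set.notMem_empty e)⟩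
  | succ m ih =>
    by_cases hS : ∀ x : E → ℝ, x ∈ perpSub W ⊔ vanishSub c
    · refine ⟨c, subset_rfl, isBase_iff.mpr ⟨hc, ?_⟩⟩
      intro y
      obtain ⟨u, hu, x, hx, huxy⟩ := Submodule.mem_sup.mp (hS y)
      refine ⟨u, hu, fun e he => ?_⟩
      have := congrFun huxy e
      simp only [Pi.add_apply] at this
      rw [hx e he, add_zero] at this
      exact this
    · push_neg at hS
      obtain ⟨x₀, hx₀⟩ := hS
      obtain ⟨γ, hγS, hγx⟩ := dualAnn' _ x₀ hx₀
      have hγW : γ ∈ W := mem_W_of_perp (fun u hu =>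
        hγS u (Submodule.mem_sup_left hu))
      have hγsupp : ∀ f, f ∉ c → γ f = 0 := by
        intro f hf
        have hs : Pi.single f (1:ℝ) ∈ vanishSub c := by
          intro g hg
          have : g ≠ f := fun hgf => hf (hgf ▸ hg)
          simp [Pi.single_apply, this]
        have := hγS _ (Submodule.mem_sup_right hs)
        rwa [dot_single, mul_one] at this
      have hγne : γ ≠ 0 := by
        intro h0
        apply hγx
        simp [h0, dot]
      obtain ⟨e, he⟩ : ∃ e, γ e ≠ 0 := by
        by_contra hall
        push_neg at hall
        exact hγne (funext hall)
      have hec : e ∈ c := by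
        by_contra hec
        exact he (hγsupp e hec)
      have hinj' : InjB W (c \ {e}) := by
        intro u hu hub
        apply hc u hu
        intro f hf
        by_cases hfe : f = e
        · subst hfe
          have h0 : dot γ u = 0 := hu γ hγW
          rw [dot] at h0
          have : ∀ g ∈ Finset.univ, g ≠ f → γ g * u g = 0 := by
            intro g _ hgf
            by_cases hgc : g ∈ c
            · rw [hub g ⟨hgc, by simp [hgf]⟩, mul_zero]
            · rw [hγsupp g hgc, zero_mul]
          rw [Finset.sum_eq_single f (fun g hg hgf => this g hg hgf) (by simp)] at h0
          exact (mul_eq_zero.mp h0).resolve_left he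
        · exact hub f ⟨hf, by simp [hfe]⟩
      have hcard : (c \ {e}).ncard < c.ncard := by
        apply Set.ncard_lt_ncard _ (Set.toFinite _)
        exact ⟨Set.diff_subset, fun hsub => (hsub hec).2 rfl⟩
      obtain ⟨b, hbsub, hbase⟩ := ih _ hinj' (by omega)
      exact ⟨b, hbsub.trans Set.diff_subset, hbase⟩

end HT

namespace HT
variable {E : Type*} [Fintype E] {W : Submodule ℝ (E → ℝ)}

lemma vb_ne {b : Set E} (hb : IsBase W b) (h : E → ℝ)
    (hh : ∀ γ : E → ℝ, IsCircuit (W : Set (E → ℝ)) γ → dot h γ ≠ 0)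
    {e₀ : E} (he₀ : e₀ ∉ b) : vbF W h b e₀ ≠ 0 := by
  classical
  intro hv0
  obtain ⟨hvperp, hvb⟩ := vbF_spec hb h
  obtain ⟨hinj, hsurj⟩ := isBase_iff.mp hb
  -- the single e₀ is not in the sum submodule
  have hx₀ : Pi.single e₀ (1:ℝ) ∉ perpSub W ⊔ vanishSub (insert e₀ b) := by
    intro hmem
    obtain ⟨u, hu, x, hx, huxy⟩ := Submodule.mem_sup.mp hmem
    have hu0 : u = 0 := by
      apply hinj u hu
      intro f hf
      have := congrFun huxy f
      have hne : f ≠ e₀ := fun hfe => he₀ (hfe ▸ hf)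
      simp only [Pi.add_apply] at this
      rw [hx f (Set.mem_insert_of_mem _ hf), add_zero] at this
      rw [this, Pi.single_apply, if_neg hne]
    have := congrFun huxy e₀
    simp only [Pi.add_apply, hu0, Pi.zero_apply, zero_add] at this
    rw [hx e₀ (Set.mem_insert _ _)] at this
    simp [Pi.single_apply] at this
  obtain ⟨γ, hγS, hγx⟩ := dualAnn' _ _ hx₀
  have hγW : γ ∈ W := mem_W_of_perp (fun u hu => hγS u (Submodule.mem_sup_left hu))
  have hγsupp : ∀ f, f ∉ insert e₀ b → γ f = 0 := by
    intro f hf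
    have hs : Pi.single f (1:ℝ) ∈ vanishSub (insert e₀ b) := by
      intro g hg
      have : g ≠ f := fun hgf => hf (hgf ▸ hg)
      simp [Pi.single_apply, this]
    have := hγS _ (Submodule.mem_sup_right hs)
    rwa [dot_single, mul_one] at this
  have hγne : γ ≠ 0 := fun h0 => hγx (by simp [h0, dot])
  obtain ⟨χ, hχcirc, hχsupp⟩ := exists_circuit (W : Set (E → ℝ)) γ hγW hγne
  apply hh χ hχcirc
  -- dot h χ = dot (vbF) χ = 0
  have h1 : dot χ (vbF W h b - h) = 0 := hvperp χ hχcirc.1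
  rw [dot_sub] at h1
  have h2 : dot χ (vbF W h b) = 0 := by
    rw [dot]
    apply Finset.sum_eq_zero
    intro f _
    by_cases hχf : χ f = 0
    · rw [hχf, zero_mul]
    · have hfγ : γ f ≠ 0 := hχsupp hχf
      have hfsupp : f ∈ insert e₀ b := by
        by_contra hf
        exact hfγ (hγsupp f hf)
      rcases Set.mem_insert_iff.mp hfsupp with hfe | hfb
      · rw [hfe, hv0, mul_zero]
      · rw [hvb f hfb, mul_zero]
  rw [h2] at h1
  rw [dot_comm]
  linarith

end HT

namespace HT
variable {E : Type*} [Fintype E] {W : Submodule ℝ (E → ℝ)}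

noncomputable def sgn (x : ℝ) : ℝ := if 0 ≤ x then 1 else -1

lemma sgn_or (x : ℝ) : sgn x = 1 ∨ sgn x = -1 := by
  unfold sgn; split <;> simp

lemma sgn_ne (x : ℝ) : sgn x ≠ 0 := by
  rcases sgn_or x with h | h <;> rw [h] <;> norm_num

lemma sgn_mul_nonneg (x : ℝ) : 0 ≤ sgn x * x := by
  unfold sgn; split
  · linarith
  · nlinarith

lemma sgn_mul_pos {x : ℝ} (hx : x ≠ 0) : 0 < sgn x * x := by
  rcases lt_or_gt_of_ne hx with h | h
  · rw [sgn, if_neg (by linarith)]; nlinarith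
  · rw [sgn, if_pos (by linarith)]; linarith

lemma eq_sgn {a x : ℝ} (ha : a = 1 ∨ a = -1) (h1 : 0 ≤ a * x) (h2 : x ≠ 0) : a = sgn x := by
  rcases ha with ha | ha <;> subst ha
  · rw [sgn, if_pos (by linarith)]
  · rcases lt_or_gt_of_ne h2 with h | h
    · rw [sgn, if_neg (by linarith)]
    · nlinarith

lemma neg_sgn_mul {c x : ℝ} (hc : c ≠ 0) (h1 : 0 ≤ -sgn c * x) : x * c ≤ 0 := by
  rcases lt_or_gt_of_ne hc with h | h
  · rw [sgn, if_neg (by linarith)] at h1; nlinarith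
  · rw [sgn, if_pos (by linarith)] at h1; nlinarith

/-- bounded cone means z is nonpositive on the cone -/
lemma cone_nonpos {z α : E → ℝ} (hbd : IsBoundedSV W z α) :
    ∀ u ∈ cone W α, dot z u ≤ 0 := by
  intro u hu
  by_contra hpos
  push_neg at hpos
  obtain ⟨M, hM⟩ := hbd
  set t : ℝ := (|M| + 1) / dot z u with ht
  have htpos : 0 ≤ t := div_nonneg (by positivity) (le_of_lt hpos)
  have htu : t • u ∈ cone W α := by
    refine ⟨(perpSub W).smul_mem t hu.1, fun e => ?_⟩
    have := hu.2 e
    simp only [Pi.smul_apply, smul_eq_mul]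
    calc (0:ℝ) = t * 0 := by ring
    _ ≤ t * (α e * u e) := by exact mul_le_mul_of_nonneg_left this htpos
    _ = α e * (t * u e) := by ring
  have := hM (Set.mem_image_of_mem _ htu)
  rw [dot_smul] at this
  rw [ht, div_mul_cancel₀ _ (ne_of_gt hpos)] at this
  have : |M| + 1 ≤ M := this
  have := le_abs_self M
  linarith

/-- minimum of finitely many positive reals -/
lemma fin_min (f : E → ℝ) (hf : ∀ e, 0 < f e) : ∃ t, 0 < t ∧ ∀ e, t ≤ f e := by
  classical
  rcases isEmpty_or_nonempty E with hE | hE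
  · exact ⟨1, one_pos, fun e => (IsEmpty.false e).elim⟩
  · refine ⟨min 1 (Finset.univ.inf' Finset.univ_nonempty f), ?_, ?_⟩
    · apply lt_min one_pos
      rw [Finset.lt_inf'_iff]
      exact fun e _ => hf e
    · intro e
      exact le_trans (min_le_right _ _) (Finset.inf'_le _ (Finset.mem_univ e))

/-- small positive step preserving sign conditions -/
lemma exists_pos_step (α v d : E → ℝ) (Hv : ∀ e, 0 ≤ α e * v e)
    (H : ∀ e, α e * d e < 0 → 0 < α e * v e) :
    ∃ t : ℝ, 0 < t ∧ ∀ e, 0 ≤ α e * (v e + t * d e) := by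
  classical
  set g : E → ℝ := fun e => if α e * d e < 0 then (α e * v e) / (-(α e * d e)) else 1 with hg
  have hgpos : ∀ e, 0 < g e := by
    intro e
    show 0 < if α e * d e < 0 then (α e * v e) / (-(α e * d e)) else 1
    by_cases hlt : α e * d e < 0
    · rw [if_pos hlt]; exact div_pos (H e hlt) (by linarith)
    · rw [if_neg hlt]; exact one_pos
  obtain ⟨t, htpos, ht⟩ := fin_min g hgpos
  refine ⟨t, htpos, fun e => ?_⟩
  by_cases hlt : α e * d e < 0
  · have h1 : t ≤ (α e * v e) / (-(α e * d e)) := by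
      have h1' := ht e
      show t ≤ (α e * v e) / (-(α e * d e))
      have hge : g e = (α e * v e) / (-(α e * d e)) := by
        show (if α e * d e < 0 then (α e * v e) / (-(α e * d e)) else 1) = _
        rw [if_pos hlt]
      rwa [hge] at h1'
    have h2 : t * (-(α e * d e)) ≤ α e * v e := by
      rw [← div_mul_cancel₀ (α e * v e) (ne_of_gt (show (0:ℝ) < -(α e * d e) by linarith))]
      exact mul_le_mul_of_nonneg_right h1 (by linarith)
    nlinarith
  · push_neg at hlt
    have := Hv e
    nlinarith

/-- step to the boundary: hits a new zero -/
lemma step_to_boundary (α v d : E → ℝ) (hα : ∀ e, α e = 1 ∨ α e = -1)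
    (Hv : ∀ e, 0 ≤ α e * v e) (Hd : ∀ f, α f * d f < 0 → 0 < α f * v f)
    (hne : ∃ f, α f * d f < 0) :
    ∃ t : ℝ, 0 < t ∧ (∀ e, 0 ≤ α e * (v e + t * d e)) ∧
      ∃ f, d f ≠ 0 ∧ v f + t * d f = 0 ∧ v f ≠ 0 := by
  classical
  set F : Finset E := Finset.univ.filter (fun f => α f * d f < 0) with hF
  have hFne : F.Nonempty := by
    obtain ⟨f, hf⟩ := hne
    exact ⟨f, by simp [hF, hf]⟩
  set g : E → ℝ := fun f => (α f * v f) / (-(α f * d f)) with hg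
  set t : ℝ := F.inf' hFne g with htdef
  have hmemF : ∀ f ∈ F, α f * d f < 0 := fun f hf => by
    simpa [hF] using (Finset.mem_filter.mp hf).2
  have htpos : 0 < t := by
    rw [htdef, Finset.lt_inf'_iff]
    intro f hf
    exact div_pos (Hd f (hmemF f hf)) (by have := hmemF f hf; linarith)
  have hstep : ∀ e, 0 ≤ α e * (v e + t * d e) := by
    intro e
    by_cases hlt : α e * d e < 0
    · have heF : e ∈ F := by simp [hF, hlt]
      have h1 : t ≤ g e := Finset.inf'_le _ heF
      have h2 : t * (-(α e * d e)) ≤ α e * v e := by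
        rw [hg] at h1
        rw [← div_mul_cancel₀ (α e * v e) (ne_of_gt (show (0:ℝ) < -(α e * d e) by linarith))]
        exact mul_le_mul_of_nonneg_right h1 (by linarith)
      nlinarith
    · push_neg at hlt
      have := Hv e
      nlinarith
  obtain ⟨f, hfF, hfeq⟩ := Finset.exists_mem_eq_inf' hFne g
  have hfd : α f * d f < 0 := hmemF f hfF
  have hαf : α f ≠ 0 := by rcases hα f with h | h <;> rw [h] <;> norm_num
  have hfv : 0 < α f * v f := Hd f hfd
  refine ⟨t, htpos, hstep, f, ?_, ?_, ?_⟩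
  · intro h0; rw [h0, mul_zero] at hfd; exact lt_irrefl 0 hfd
  · have h4 : α f * d f ≠ 0 := ne_of_lt hfd
    rw [htdef, hfeq]
    show v f + (α f * v f) / (-(α f * d f)) * d f = 0
    have hdf : d f ≠ 0 := fun h0 => by rw [h0, mul_zero] at hfd; exact lt_irrefl 0 hfd
    field_simp
    ring
  · intro h0; rw [h0, mul_zero] at hfv; exact lt_irrefl 0 hfv

end HT

namespace HT
variable {E : Type*} [Fintype E] {W : Submodule ℝ (E → ℝ)}

open Classical in
noncomputable def mu (W : Submodule ℝ (E → ℝ)) (h z : E → ℝ) (b : Set E) : E → ℝ :=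
  fun e => if e ∈ b then -(sgn (dot z (uvecF W b e))) else sgn (vbF W h b e)

section Mu
variable {h z : E → ℝ} {b : Set E}

lemma mu_sign : ∀ e, mu W h z b e = 1 ∨ mu W h z b e = -1 := by
  intro e
  rw [mu]
  split
  · rcases sgn_or (dot z (uvecF W b e)) with hs | hs <;> rw [hs] <;> simp
  · exact sgn_or _

lemma ce_ne (hb : IsBase W b) (hz : ∀ χ : E → ℝ, IsCircuit (perp W) χ → dot z χ ≠ 0)
    {e : E} (he : e ∈ b) : dot z (uvecF W b e) ≠ 0 :=
  hz _ (uvec_circuit hb he)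

lemma vb_mem_chamber (hb : IsBase W b) (h z : E → ℝ) :
    vbF W h b ∈ Chamber W h (mu W h z b) := by
  classical
  obtain ⟨hvperp, hvb⟩ := vbF_spec hb h
  refine ⟨hvperp, fun e => ?_⟩
  rw [mu]
  by_cases he : e ∈ b
  · rw [if_pos he, hvb e he, mul_zero]
  · rw [if_neg he]
    exact sgn_mul_nonneg _

lemma mu_max (hb : IsBase W b) (hz : ∀ χ : E → ℝ, IsCircuit (perp W) χ → dot z χ ≠ 0) :
    ∀ w ∈ Chamber W h (mu W h z b), dot z w ≤ dot z (vbF W h b) := by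
  classical
  intro w hw
  obtain ⟨hvperp, hvb⟩ := vbF_spec hb h
  have hu : w - vbF W h b ∈ perp W := by
    have := (perpSub W).sub_mem hw.1 hvperp
    simpa [mem_perpSub] using this
  have hexp := dot_expansion hb hu z
  have hterm : ∀ e ∈ (Set.toFinite b).toFinset, (w - vbF W h b) e * dot z (uvecF W b e) ≤ 0 := by
    intro e he'
    have he : e ∈ b := by simpa using he'
    have hce := ce_ne hb hz he
    have hwe := hw.2 e
    rw [mu, if_pos he] at hwe
    have : (w - vbF W h b) e = w e := by simp [hvb e he]
    rw [this]
    exact neg_sgn_mul hce hwe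
  have : dot z (w - vbF W h b) ≤ 0 := by
    rw [hexp]
    exact Finset.sum_nonpos hterm
  rw [dot_sub] at this
  linarith

lemma mu_bounded (hb : IsBase W b) (hz : ∀ χ : E → ℝ, IsCircuit (perp W) χ → dot z χ ≠ 0) :
    IsBoundedSV W z (mu W h z b) := by
  classical
  refine ⟨0, fun y hy => ?_⟩
  obtain ⟨u, hu, rfl⟩ := hy
  have hexp := dot_expansion hb hu.1 z
  show dot z u ≤ 0
  rw [hexp]
  apply Finset.sum_nonpos
  intro e he'
  have he : e ∈ b := by simpa using he'
  have hce := ce_ne hb hz he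
  have hue := hu.2 e
  rw [mu, if_pos he] at hue
  exact neg_sgn_mul hce hue

lemma mu_feasible (hb : IsBase W b) (h z : E → ℝ) : IsFeasible W h (mu W h z b) :=
  ⟨vbF W h b, vb_mem_chamber hb h z⟩

/-- uniqueness: any sign vector whose chamber contains `vbF` as maximum equals `mu` -/
lemma mu_unique (hb : IsBase W b)
    (hh : ∀ γ : E → ℝ, IsCircuit (W : Set (E → ℝ)) γ → dot h γ ≠ 0)
    (hz : ∀ χ : E → ℝ, IsCircuit (perp W) χ → dot z χ ≠ 0)
    (α : E → ℝ) (hα : ∀ e, α e = 1 ∨ α e = -1)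
    (hmem : vbF W h b ∈ Chamber W h α)
    (hmax : ∀ w ∈ Chamber W h α, dot z w ≤ dot z (vbF W h b)) :
    α = mu W h z b := by
  classical
  obtain ⟨hvperp, hvb⟩ := vbF_spec hb h
  funext e
  rw [mu]
  by_cases he : e ∈ b
  · rw [if_pos he]
    set c := dot z (uvecF W b e) with hc
    have hce : c ≠ 0 := ce_ne hb hz he
    by_contra hne
    have hαe : α e = sgn c := by
      rcases hα e with h1 | h1 <;> rcases sgn_or c with h2 | h2
      · rw [h1, h2]
      · exact absurd (by rw [h1, h2]; norm_num) hne
      · exact absurd (by rw [h1, h2]) hne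
      · rw [h1, h2]
    -- move in direction d := α e • uvecF W b e
    obtain ⟨huperp, hue1, hub0⟩ := uvecF_spec hb he
    set d : E → ℝ := α e • uvecF W b e with hd
    have hdz : 0 < dot z d := by
      rw [hd, dot_smul, hαe]
      exact sgn_mul_pos hce
    obtain ⟨t, htpos, hts⟩ := exists_pos_step α (vbF W h b) d hmem.2 (fun f hf => by
      by_cases hfb : f ∈ b
      · exfalso
        by_cases hfe : f = e
        · subst hfe
          rw [hd] at hf
          simp only [Pi.smul_apply, smul_eq_mul, hue1, mul_one] at hf
          nlinarith [hf]
        · rw [hd] at hf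
          simp only [Pi.smul_apply, smul_eq_mul, hub0 f hfb hfe, mul_zero] at hf
          exact lt_irrefl 0 hf
      · have hvf : vbF W h b f ≠ 0 := vb_ne hb h hh hfb
        have := hmem.2 f
        rcases lt_or_eq_of_le this with hlt | heq
        · exact hlt
        · exfalso
          rcases mul_eq_zero.mp heq.symm with h1 | h1
          · rcases hα f with h2 | h2 <;> rw [h2] at h1 <;> norm_num at h1
          · exact hvf h1)
    have hmem' : vbF W h b + t • d ∈ Chamber W h α := by
      constructor
      · have : vbF W h b + t • d - h = (vbF W h b - h) + t • d := by ring_nf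
        rw [this]
        exact (perpSub W).add_mem hvperp ((perpSub W).smul_mem _ ((perpSub W).smul_mem _ huperp))
      · intro f
        have := hts f
        simpa [mul_add, mul_comm] using this
    have := hmax _ hmem'
    rw [dot_add, dot_smul] at this
    nlinarith
  · rw [if_neg he]
    have hvf : vbF W h b e ≠ 0 := vb_ne hb h hh he
    exact eq_sgn (hα e) (hmem.2 e) hvf

end Mu
end HT

namespace HT
variable {E : Type*} [Fintype E] {W : Submodule ℝ (E → ℝ)}

lemma pos_of {a x : ℝ} (ha : a = 1 ∨ a = -1) (h1 : 0 ≤ a * x) (h2 : x ≠ 0) : 0 < a * x := by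
  rcases lt_or_eq_of_le h1 with h | h
  · exact h
  · exfalso
    rcases mul_eq_zero.mp h.symm with h3 | h3
    · rcases ha with h4 | h4 <;> rw [h4] at h3 <;> norm_num at h3
    · exact h2 h3

section Main
variable {h z α : E → ℝ}

/-- the maximizer of a generic linear functional on a chamber is unique -/
lemma max_unique (hα : ∀ e, α e = 1 ∨ α e = -1)
    (hz : ∀ χ : E → ℝ, IsCircuit (perp W) χ → dot z χ ≠ 0)
    {v v' : E → ℝ} (hv : v ∈ Chamber W h α) (hv' : v' ∈ Chamber W h α)
    (hmax : ∀ w ∈ Chamber W h α, dot z w ≤ dot z v)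
    (hmax' : ∀ w ∈ Chamber W h α, dot z w ≤ dot z v') : v = v' := by
  classical
  by_contra hne
  have hvv : dot z v = dot z v' := le_antisymm (hmax' v hv) (hmax v' hv')
  have humem : v' - v ∈ perp W := by
    have := (perpSub W).sub_mem hv'.1 hv.1
    simpa [mem_perpSub] using this
  have hune : v' - v ≠ 0 := fun h0 => hne (sub_eq_zero.mp h0).symm
  obtain ⟨χ, hχcirc, hχsupp⟩ := exists_circuit (perp W) _ humem hune
  set m : E → ℝ := fun f => (v f + v' f)/2 with hm
  have hmmem : m ∈ Chamber W h α := by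
    constructor
    · have : m - h = (1/2 : ℝ) • (v - h) + (1/2 : ℝ) • (v' - h) := by
        funext f; simp [hm]; ring
      rw [this]
      exact (perpSub W).add_mem ((perpSub W).smul_mem _ hv.1) ((perpSub W).smul_mem _ hv'.1)
    · intro f
      have h1 := hv.2 f
      have h2 := hv'.2 f
      have : α f * m f = (1/2:ℝ) * (α f * v f) + (1/2:ℝ) * (α f * v' f) := by
        simp [hm]; ring
      rw [this]; linarith
  have hstrict : ∀ f, χ f ≠ 0 → 0 < α f * m f := by
    intro f hf
    have huf : (v' - v) f ≠ 0 := hχsupp hf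
    have h1 := hv.2 f
    have h2 := hv'.2 f
    have hmf : α f * m f = (1/2:ℝ) * (α f * v f) + (1/2:ℝ) * (α f * v' f) := by
      simp [hm]; ring
    have hαf : α f ≠ 0 := by rcases hα f with h4 | h4 <;> rw [h4] <;> norm_num
    rcases lt_or_eq_of_le h1 with h3 | h3
    · rw [hmf]; nlinarith
    rcases lt_or_eq_of_le h2 with h4 | h4
    · rw [hmf]; nlinarith
    exfalso
    apply huf
    have hv0 : v f = 0 := by
      rcases mul_eq_zero.mp h3.symm with h5 | h5
      · exact absurd h5 hαf
      · exact h5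
    have hv'0 : v' f = 0 := by
      rcases mul_eq_zero.mp h4.symm with h5 | h5
      · exact absurd h5 hαf
      · exact h5
    simp [hv0, hv'0]
  set d : E → ℝ := sgn (dot z χ) • χ with hd
  have hdz : 0 < dot z d := by
    rw [hd, dot_smul]
    exact sgn_mul_pos (hz χ hχcirc)
  obtain ⟨t, htpos, hts⟩ := exists_pos_step α m d hmmem.2 (fun f hf => by
    apply hstrict f
    intro h0
    rw [hd] at hf
    simp [h0] at hf)
  have hmem' : m + t • d ∈ Chamber W h α := by
    constructor
    · have : m + t • d - h = (m - h) + t • d := by funext f; simp; ring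
      rw [this]
      exact (perpSub W).add_mem hmmem.1 ((perpSub W).smul_mem _ ((perpSub W).smul_mem _ hχcirc.1))
    · intro f
      have := hts f
      simpa [mul_add, mul_comm] using this
  have hle := hmax _ hmem'
  have hm2 : m = (1/2 : ℝ) • (v + v') := by funext f; simp [hm]; ring
  have hzm : dot z m = dot z v := by rw [hm2, dot_smul, dot_add, hvv]; ring
  have heq2 : dot z (m + t • d) = dot z m + t * dot z d := by
    rw [dot_add]
    congr 1
    exact dot_smul z d t
  rw [heq2, hzm] at hle
  nlinarith

/-- b is recovered from the vertex -/
lemma b_eq_zeros {b : Set E} (hb : IsBase W b)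
    (hh : ∀ γ : E → ℝ, IsCircuit (W : Set (E → ℝ)) γ → dot h γ ≠ 0) :
    b = {e | vbF W h b e = 0} := by
  ext e
  constructor
  · intro he; exact (vbF_spec hb h).2 e he
  · intro he
    by_contra hne
    exact vb_ne hb h hh hne he

/-- phase 1: from any chamber point reach a vertex weakly improving z -/
lemma phase1 (hα : ∀ e, α e = 1 ∨ α e = -1)
    (hz : ∀ χ : E → ℝ, IsCircuit (perp W) χ → dot z χ ≠ 0)
    (hbd : IsBoundedSV W z α) :
    ∀ v ∈ Chamber W h α, ∃ v' ∈ Chamber W h α, dot z v ≤ dot z v' ∧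
      ∀ u ∈ perp W, (∀ e, v' e = 0 → u e = 0) → u = 0 := by
  classical
  intro v hv
  obtain ⟨n, hn⟩ : ∃ n, ({e | v e ≠ 0}).ncard ≤ n := ⟨_, le_refl _⟩
  induction n generalizing v with
  | zero =>
    refine ⟨v, hv, le_rfl, fun u hu h0 => ?_⟩
    have hvz : ∀ e, v e = 0 := by
      intro e
      by_contra he
      have : ({e | v e ≠ 0}).ncard = 0 := Nat.le_zero.mp hn
      have hemp := (Set.ncard_eq_zero (Set.toFinite _)).mp this
      rw [Set.eq_empty_iff_forall_notMem] at hemp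
      exact (hemp e) he
    funext e
    exact h0 e (hvz e)
  | succ m ih =>
    by_cases hinj : ∀ u ∈ perp W, (∀ e, v e = 0 → u e = 0) → u = 0
    · exact ⟨v, hv, le_rfl, hinj⟩
    · push_neg at hinj
      obtain ⟨u, hu, hu0, hune⟩ := hinj
      obtain ⟨χ, hχcirc, hχsupp⟩ := exists_circuit (perp W) u hu hune
      have hχ0 : ∀ e, v e = 0 → χ e = 0 := by
        intro e he
        by_contra hne
        exact absurd (hu0 e he) (hχsupp hne)
      set d : E → ℝ := sgn (dot z χ) • χ with hd
      have hdz : 0 < dot z d := by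
        rw [hd, dot_smul]
        exact sgn_mul_pos (hz χ hχcirc)
      have hdperp : d ∈ perp W := (perpSub W).smul_mem _ hχcirc.1
      have hd0 : ∀ e, v e = 0 → d e = 0 := by
        intro e he
        rw [hd]
        simp [hχ0 e he]
      have hne2 : ∃ f, α f * d f < 0 := by
        by_contra hall
        push_neg at hall
        have : d ∈ cone W α := ⟨hdperp, hall⟩
        have := cone_nonpos hbd d this
        linarith
      have Hd : ∀ f, α f * d f < 0 → 0 < α f * v f := by
        intro f hf
        have hdf : d f ≠ 0 := fun h0 => by rw [h0, mul_zero] at hf; exact lt_irrefl 0 hf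
        have hvf : v f ≠ 0 := fun h0 => hdf (hd0 f h0)
        exact pos_of (hα f) (hv.2 f) hvf
      obtain ⟨t, htpos, hts, f, hdf, hvf0, hvfne⟩ := step_to_boundary α v d hα hv.2 Hd hne2
      set v' : E → ℝ := v + t • d with hv'
      have hv'mem : v' ∈ Chamber W h α := by
        constructor
        · have : v' - h = (v - h) + t • d := by funext g; simp [hv']; ring
          rw [this]
          exact (perpSub W).add_mem hv.1 ((perpSub W).smul_mem _ hdperp)
        · intro g
          have := hts g
          simpa [hv', mul_add, mul_comm] using this
      have hval : dot z v < dot z v' := by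
        rw [hv', dot_add, dot_smul]
        nlinarith
      have hzero : ∀ e, v e = 0 → v' e = 0 := by
        intro e he
        rw [hv']
        simp [he, hd0 e he]
      have hss : {e | v' e ≠ 0} ⊂ {e | v e ≠ 0} := by
        constructor
        · intro e he
          by_contra hc
          simp only [Set.mem_setOf_eq, not_not] at hc
          exact he (hzero e hc)
        · intro hsub
          have : v' f ≠ 0 → False := fun hc => hc (by rw [hv']; simpa using hvf0)
          exact this (hsub (by simpa using hvfne))
      have hcard : ({e | v' e ≠ 0}).ncard < ({e | v e ≠ 0}).ncard :=
        Set.ncard_lt_ncard hss (Set.toFinite _)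
      obtain ⟨v'', hv''mem, hv''le, hv''inj⟩ := ih v' hv'mem (by omega)
      exact ⟨v'', hv''mem, by linarith, hv''inj⟩

end Main
end HT

namespace HT
variable {E : Type*} [Fintype E] {W : Submodule ℝ (E → ℝ)}

lemma eq_sgn_of_ne_neg {a c : ℝ} (ha : a = 1 ∨ a = -1) (hne : a ≠ -sgn c) : a = sgn c := by
  rcases ha with h1 | h1 <;> rcases sgn_or c with h2 | h2
  · rw [h1, h2]
  · exact absurd (by rw [h1, h2]; norm_num) hne
  · exact absurd (by rw [h1, h2]) hne
  · rw [h1, h2]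

section Surj
variable {h z α : E → ℝ}

/-- from a chamber point, reach a base vertex in the chamber weakly improving z -/
lemma reach_vertex (hα : ∀ e, α e = 1 ∨ α e = -1)
    (hz : ∀ χ : E → ℝ, IsCircuit (perp W) χ → dot z χ ≠ 0)
    (hbd : IsBoundedSV W z α) {v : E → ℝ} (hv : v ∈ Chamber W h α) :
    ∃ b : Set E, IsBase W b ∧ vbF W h b ∈ Chamber W h α ∧ dot z v ≤ dot z (vbF W h b) := by
  obtain ⟨v', hv'mem, hv'le, hv'inj⟩ := phase1 hα hz hbd v hv
  obtain ⟨b, hbsub, hbase⟩ := base_of_inj {e | v' e = 0} (fun u hu hu0 =>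
    hv'inj u hu (fun e he => hu0 e he))
  have hveq : v' = vbF W h b :=
    vb_unique hbase ⟨hv'mem.1, fun e he => hbsub he⟩ (vbF_spec hbase h)
  rw [hveq] at hv'mem hv'le
  exact ⟨b, hbase, hv'mem, hv'le⟩

lemma dichotomy (hα : ∀ e, α e = 1 ∨ α e = -1)
    (hh : ∀ γ : E → ℝ, IsCircuit (W : Set (E → ℝ)) γ → dot h γ ≠ 0)
    (hz : ∀ χ : E → ℝ, IsCircuit (perp W) χ → dot z χ ≠ 0)
    (hbd : IsBoundedSV W z α) {b : Set E} (hb : IsBase W b)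
    (hbmem : vbF W h b ∈ Chamber W h α) :
    mu W h z b = α ∨ ∃ b' : Set E, IsBase W b' ∧ vbF W h b' ∈ Chamber W h α ∧
      dot z (vbF W h b) < dot z (vbF W h b') := by
  classical
  by_cases hall : ∀ e ∈ b, α e = -(sgn (dot z (uvecF W b e)))
  · left
    funext e
    rw [mu]
    by_cases he : e ∈ b
    · rw [if_pos he]; exact (hall e he).symm
    · rw [if_neg he]; exact (eq_sgn (hα e) (hbmem.2 e) (vb_ne hb h hh he)).symm
  · right
    push_neg at hall
    obtain ⟨e, he, hne⟩ := hall
    have hαe : α e = sgn (dot z (uvecF W b e)) := eq_sgn_of_ne_neg (hα e) hne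
    set c := dot z (uvecF W b e) with hc
    have hce : c ≠ 0 := ce_ne hb hz he
    obtain ⟨huperp, hue1, hub0⟩ := uvecF_spec hb he
    obtain ⟨hvperp, hvb⟩ := vbF_spec hb h
    set d : E → ℝ := α e • uvecF W b e with hd
    have hdz : 0 < dot z d := by
      rw [hd, dot_smul, hαe]
      exact sgn_mul_pos hce
    have hdperp : d ∈ perp W := (perpSub W).smul_mem _ huperp
    have hne2 : ∃ f, α f * d f < 0 := by
      by_contra hallf
      push_neg at hallf
      have := cone_nonpos hbd d ⟨hdperp, hallf⟩
      linarith
    have Hd : ∀ f, α f * d f < 0 → 0 < α f * vbF W h b f := by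
      intro f hf
      by_cases hfb : f ∈ b
      · exfalso
        by_cases hfe : f = e
        · subst hfe
          rw [hd] at hf
          simp only [Pi.smul_apply, smul_eq_mul, hue1, mul_one] at hf
          nlinarith [hf]
        · rw [hd] at hf
          simp only [Pi.smul_apply, smul_eq_mul, hub0 f hfb hfe, mul_zero] at hf
          exact lt_irrefl 0 hf
      · exact pos_of (hα f) (hbmem.2 f) (vb_ne hb h hh hfb)
    obtain ⟨t, htpos, hts, f, hdf, hvf0, hvfne⟩ :=
      step_to_boundary α (vbF W h b) d hα hbmem.2 Hd hne2
    have hv'mem : vbF W h b + t • d ∈ Chamber W h α := by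
      constructor
      · have : vbF W h b + t • d - h = (vbF W h b - h) + t • d := by
          funext g; simp; ring
        rw [this]
        exact (perpSub W).add_mem hvperp ((perpSub W).smul_mem _ hdperp)
      · intro g
        have := hts g
        simpa [mul_add, mul_comm] using this
    have hval : dot z (vbF W h b) < dot z (vbF W h b + t • d) := by
      have heq2 : dot z (vbF W h b + t • d) = dot z (vbF W h b) + t * dot z d := by
        rw [dot_add]
        congr 1
        exact dot_smul z d t
      rw [heq2]
      nlinarith
    obtain ⟨b', hb', hb'mem, hb'le⟩ := reach_vertex hα hz hbd hv'mem
    exact ⟨b', hb', hb'mem, lt_of_lt_of_le hval hb'le⟩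

lemma surj (hα : ∀ e, α e = 1 ∨ α e = -1)
    (hh : ∀ γ : E → ℝ, IsCircuit (W : Set (E → ℝ)) γ → dot h γ ≠ 0)
    (hz : ∀ χ : E → ℝ, IsCircuit (perp W) χ → dot z χ ≠ 0)
    (hfeas : IsFeasible W h α) (hbd : IsBoundedSV W z α) :
    ∃ b : Set E, IsBase W b ∧ mu W h z b = α := by
  classical
  obtain ⟨v₀, hv₀⟩ := hfeas
  obtain ⟨b₁, hb₁, hb₁mem, _⟩ := reach_vertex hα hz hbd hv₀
  have KEY : ∀ n : ℕ, ∀ b : Set E, IsBase W b → vbF W h b ∈ Chamber W h α →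
      Set.ncard {b' : Set E | IsBase W b' ∧ dot z (vbF W h b) < dot z (vbF W h b')} ≤ n →
      ∃ b₀ : Set E, IsBase W b₀ ∧ mu W h z b₀ = α := by
    intro n
    induction n with
    | zero =>
      intro b hb hbmem hcard
      rcases dichotomy hα hh hz hbd hb hbmem with heq | ⟨b', hb', hb'mem, hb'lt⟩
      · exact ⟨b, hb, heq⟩
      · exfalso
        have hpos : 0 < Set.ncard {b' : Set E | IsBase W b' ∧
            dot z (vbF W h b) < dot z (vbF W h b')} := by
          rw [Set.ncard_pos (Set.toFinite _)]
          exact ⟨b', hb', hb'lt⟩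
        omega
    | succ m ih =>
      intro b hb hbmem hcard
      rcases dichotomy hα hh hz hbd hb hbmem with heq | ⟨b', hb', hb'mem, hb'lt⟩
      · exact ⟨b, hb, heq⟩
      · apply ih b' hb' hb'mem
        have hss : {b'' : Set E | IsBase W b'' ∧ dot z (vbF W h b') < dot z (vbF W h b'')} ⊂
            {b'' : Set E | IsBase W b'' ∧ dot z (vbF W h b) < dot z (vbF W h b'')} := by
          constructor
          · rintro b'' ⟨h1, h2⟩
            exact ⟨h1, lt_trans hb'lt h2⟩
          · intro hsub
            have := hsub ⟨hb', hb'lt⟩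
            exact lt_irrefl _ this.2
        have := Set.ncard_lt_ncard hss (Set.toFinite _)
        omega
  exact KEY _ b₁ hb₁ hb₁mem le_rfl

end Surj
end HT

/-- Bases are in bijection with bounded feasible chambers: for generic `h` and
`z`, each base `b` determines a unique bounded feasible sign vector `μ b` whose
chamber has `ζ`-maximum at the vertex `H_b`, and `b ↦ μ b` is a bijection from
bases onto bounded feasible sign vectors. -/
theorem bases_biject_with_bounded_feasible_chambers {E : Type*} [Fintype E]
    (W : Submodule ℝ (E → ℝ)) (h z : E → ℝ)
    (hh : ∀ γ : E → ℝ, IsCircuit (W : Set (E → ℝ)) γ → dot h γ ≠ 0)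
    (hz : ∀ χ : E → ℝ, IsCircuit (perp W) χ → dot z χ ≠ 0) :
    ∃ μ : Set E → (E → ℝ),
      (∀ b : Set E, IsBase W b →
        ((∀ e, μ b e = 1 ∨ μ b e = -1) ∧
          IsFeasible W h (μ b) ∧ IsBoundedSV W z (μ b) ∧
          (∀ v : E → ℝ, v - h ∈ perp W → (∀ e ∈ b, v e = 0) →
            v ∈ Chamber W h (μ b) ∧ ∀ w ∈ Chamber W h (μ b), dot z w ≤ dot z v)) ∧
        (∀ α : E → ℝ, (∀ e, α e = 1 ∨ α e = -1) →
          IsFeasible W h α → IsBoundedSV W z α →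
          (∀ v : E → ℝ, v - h ∈ perp W → (∀ e ∈ b, v e = 0) →
            v ∈ Chamber W h α ∧ ∀ w ∈ Chamber W h α, dot z w ≤ dot z v) →
          α = μ b)) ∧
      Set.BijOn μ {b : Set E | IsBase W b}
        {α : E → ℝ | (∀ e, α e = 1 ∨ α e = -1) ∧
          IsFeasible W h α ∧ IsBoundedSV W z α} := by

  classical
  refine ⟨HT.mu W h z, fun b hb => ⟨⟨HT.mu_sign, HT.mu_feasible hb h z, HT.mu_bounded hb hz, ?_⟩, ?_⟩, ?_, ?_, ?_⟩
  · intro v hv1 hv2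
    have hveq : v = HT.vbF W h b := HT.vb_unique hb ⟨hv1, hv2⟩ (HT.vbF_spec hb h)
    rw [hveq]
    exact ⟨HT.vb_mem_chamber hb h z, HT.mu_max hb hz⟩
  · intro α hα hfeas hbd H
    obtain ⟨hs1, hs2⟩ := HT.vbF_spec hb h
    obtain ⟨hmem, hmax⟩ := H (HT.vbF W h b) hs1 hs2
    exact HT.mu_unique hb hh hz α hα hmem hmax
  · intro b hb
    exact ⟨HT.mu_sign, HT.mu_feasible hb h z, HT.mu_bounded hb hz⟩
  · intro b hb b' hb' heq
    simp only [Set.mem_setOf_eq] at hb hb'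
    have h1 : HT.vbF W h b ∈ Chamber W h (HT.mu W h z b') := by
      rw [← heq]; exact HT.vb_mem_chamber hb h z
    have h2 : HT.vbF W h b' ∈ Chamber W h (HT.mu W h z b') := HT.vb_mem_chamber hb' h z
    have hmax1 : ∀ w ∈ Chamber W h (HT.mu W h z b'), dot z w ≤ dot z (HT.vbF W h b) := by
      rw [← heq]; exact HT.mu_max hb hz
    have hmax2 := HT.mu_max hb' (h := h) hz
    have hveq := HT.max_unique HT.mu_sign hz h1 h2 hmax1 hmax2
    rw [HT.b_eq_zeros hb hh, HT.b_eq_zeros hb' hh, hveq]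
  · intro α hα
    obtain ⟨hsign, hfeas, hbd⟩ := hα
    obtain ⟨b, hb, heq⟩ := HT.surj hsign hh hz hfeas hbd
    exact ⟨b, hb, heq⟩
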